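/- Let q and p be probability densities and suppose q(x) = Σᵢ αᵢ qᵢ(x) where the qᵢ are probability densities with pairwise disjoint supports Pᵢ and αᵢ = ∫_{Pᵢ} q. If p(x) = qᵢ(x) for all x ∈ Pᵢ, then the cross-entropy −∫ q log p equals h(q) − H(α), where h is differential entropy and H(α) = −Σᵢ αᵢ log αᵢ. -/
import Mathlib


open MeasureTheory

/-- If `q` decomposes into components `qᵢ` with disjoint supports `Pᵢ` and weights
`αᵢ`, and `p = qᵢ` on `Pᵢ`, then the cross-entropy `−∫ q log p` equals
`h(q) − H(α)` where `H(α) = −Σᵢ αᵢ log αᵢ`. -/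
theorem cross_entropy_partition {D k : ℕ}
    (q p : (Fin D → ℝ) → ℝ)
    (P : Fin k → Set (Fin D → ℝ))
    (hPmeas : ∀ i, MeasurableSet (P i))
    (hPdisj : Pairwise (Function.onFun Disjoint P))
    (hq0 : ∀ x, 0 ≤ q x) (hqmeas : Measurable q)
    (hqsupp : ∀ x, x ∉ ⋃ i, P i → q x = 0)
    (α : Fin k → ℝ) (hα : ∀ i, α i = ∫ x in P i, q x)
    (hαpos : ∀ i, 0 < α i)
    (hp : ∀ i, ∀ x ∈ P i, p x = q x / α i)
    (hqlogq : Integrable (fun x => q x * Real.log (q x)))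
    (hqlogp : Integrable (fun x => q x * Real.log (p x))) :
    (-∫ x, q x * Real.log (p x)) =
      (-∫ x, q x * Real.log (q x)) + ∑ i, α i * Real.log (α i) := by
  -- q is integrable on each P i
  have hIq : ∀ i, IntegrableOn q (P i) := by
    intro i
    by_contra h
    have h0 := integral_undef h
    have := hαpos i
    rw [hα i, h0] at this
    exact lt_irrefl 0 this
  -- pointwise identity
  have hpt : ∀ x, q x * Real.log (q x) - q x * Real.log (p x) =
      ∑ i, Set.indicator (P i) (fun x => q x * Real.log (α i)) x := by
    intro x
    by_cases hx : x ∈ ⋃ i, P i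
    · obtain ⟨j, hj⟩ := Set.mem_iUnion.mp hx
      have hsum : ∑ i, Set.indicator (P i) (fun x => q x * Real.log (α i)) x
          = q x * Real.log (α j) := by
        rw [Finset.sum_eq_single j]
        · rw [Set.indicator_of_mem hj]
        · intro i _ hij
          have : x ∉ P i := fun hxi =>
            (hPdisj hij).le_bot ⟨hxi, hj⟩
          rw [Set.indicator_of_notMem this]
        · intro h; exact absurd (Finset.mem_univ j) h
      rw [hsum, hp j x hj]
      by_cases hq : q x = 0
      · simp [hq]
      · rw [Real.log_div hq (ne_of_gt (hαpos j))]; ring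
    · have hq : q x = 0 := hqsupp x hx
      have : ∀ i, Set.indicator (P i) (fun x => q x * Real.log (α i)) x = 0 := by
        intro i
        by_cases hxi : x ∈ P i
        · rw [Set.indicator_of_mem hxi, hq, zero_mul]
        · rw [Set.indicator_of_notMem hxi]
      simp [hq, this]
  -- integrability of each indicator term
  have hint : ∀ i : Fin k,
      Integrable (fun x => Set.indicator (P i) (fun x => q x * Real.log (α i)) x) := by
    intro i
    simpa using IntegrableOn.integrable_indicator ((hIq i).mul_const (Real.log (α i))) (hPmeas i)
  -- integrate the identity
  have : (∫ x, q x * Real.log (q x)) - (∫ x, q x * Real.log (p x))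
      = ∑ i, α i * Real.log (α i) := by
    rw [← integral_sub hqlogq hqlogp]
    calc (∫ x, (q x * Real.log (q x) - q x * Real.log (p x)))
        = ∫ x, ∑ i, Set.indicator (P i) (fun x => q x * Real.log (α i)) x := by
          exact integral_congr_ae (Filter.Eventually.of_forall hpt)
      _ = ∑ i, ∫ x, Set.indicator (P i) (fun x => q x * Real.log (α i)) x := by
          exact integral_finset_sum _ (fun i _ => hint i)
      _ = ∑ i, α i * Real.log (α i) := by
          apply Finset.sum_congr rfl
          intro i _
          rw [integral_indicator (hPmeas i), integral_mul_const, ← hα i]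
  linarith
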